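/- Let n ≥ 3, K a perfect field, and A, B ∈ M_n(K) such that χ_A is irreducible over K and the Galois group of χ_A over K is the full symmetric group S_n or the alternating group A_n. If A and B have a common invariant proper nonzero subspace over some extension field of K, then AB = BA. -/

import Mathlib

instance splitsFact {K : Type*} [Field K] (p : Polynomial K) :
    Fact ((p.map (algebraMap K p.SplittingField)).Splits) :=
  ⟨Polynomial.SplittingField.splits p⟩

open Polynomial Matrix in
lemma aux_exists_eigenvec {m : ℕ} {E : Type*} [Field E] (M : Matrix (Fin m) (Fin m) E)
    {μ : E} (h : M.charpoly.eval μ = 0) : ∃ v : Fin m → E, v ≠ 0 ∧ M.mulVec v = μ • v := by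
  have hdet : (Matrix.diagonal (fun _ : Fin m => μ) - M).det = 0 := by
    have heq : (Matrix.diagonal (fun _ : Fin m => μ) - M) = (charmatrix M).map (evalRingHom μ) := by
      ext i j
      by_cases hij : i = j
      · subst hij
        simp [charmatrix_apply_eq, Matrix.diagonal_apply_eq]
      · simp [charmatrix_apply_ne _ _ _ hij, Matrix.diagonal_apply_ne _ hij]
    rw [heq]
    rw [← RingHom.mapMatrix_apply, ← RingHom.map_det]
    exact h
  obtain ⟨v, hv0, hveq⟩ := Matrix.exists_mulVec_eq_zero_iff.mpr hdet
  refine ⟨v, hv0, ?_⟩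
  have := hveq
  rw [Matrix.sub_mulVec] at this
  have h2 : Matrix.diagonal (fun _ : Fin m => μ) *ᵥ v = μ • v := by
    funext i
    simp [Matrix.mulVec_diagonal]
  rw [h2, sub_eq_zero] at this
  exact this.symm

open Matrix in
lemma aux_repr_mulVec {m : ℕ} {E : Type*} [Field E] (M : Matrix (Fin m) (Fin m) E)
    {ι : Type*} [Fintype ι] (b : Module.Basis ι E (Fin m → E)) (d : ι → E)
    (heig : ∀ i, M.mulVec (b i) = d i • b i) (x : Fin m → E) (i : ι) :
    b.repr (M.mulVec x) i = d i * b.repr x i := by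
  have hx : M.mulVec x = ∑ j, (d j * b.repr x j) • b j := by
    conv_lhs => rw [← b.sum_repr x]
    rw [show M.mulVec (∑ j, b.repr x j • b j) = ∑ j, b.repr x j • M.mulVec (b j) by
      simp only [← Matrix.mulVecLin_apply, map_sum, _root_.map_smul]]
    refine Finset.sum_congr rfl fun j _ => ?_
    rw [heig j, smul_smul, mul_comm]
  rw [hx]
  have := b.repr_sum_self (fun j => d j * b.repr x j)
  rw [this]

open Matrix in
lemma aux_map_mulVec {m : ℕ} {E F : Type*} [CommRing E] [CommRing F] (f : E →+* F)
    (M : Matrix (Fin m) (Fin m) E) (x : Fin m → E) :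
    (M.map f).mulVec (fun i => f (x i)) = fun i => f (M.mulVec x i) := by
  funext i
  exact (RingHom.map_mulVec f M x i).symm

lemma aux_comb {X : Type*} [Fintype X] [DecidableEq X] (h3 : 3 ≤ Fintype.card X)
    {G : Subgroup (Equiv.Perm X)} (hG : G = ⊤ ∨ G = alternatingGroup X)
    {T : Set X} {l0 m0 : X} (hl0 : l0 ∈ T) (hm0 : m0 ∉ T)
    {a b : X} (hab : a ≠ b) :
    ∃ π : Equiv.Perm X, π ∈ G ∧ ∃ l ∈ T, ∃ m, m ∉ T ∧ π l = a ∧ π m = b := by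
  have hlm : l0 ≠ m0 := fun h => hm0 (h ▸ hl0)
  set g1 := Equiv.swap l0 a with hg1
  have hg1l : g1 l0 = a := Equiv.swap_apply_left _ _
  set m1 := g1 m0 with hm1
  have hm1a : m1 ≠ a := by
    intro h
    exact hlm (g1.injective (by rw [hg1l, ← hm1, h])).symm
  set g := Equiv.swap m1 b * g1 with hg
  have hgl : g l0 = a := by
    rw [hg, Equiv.Perm.mul_apply, hg1l, Equiv.swap_apply_of_ne_of_ne hm1a.symm hab]
  have hgm : g m0 = b := by
    rw [hg, Equiv.Perm.mul_apply, ← hm1, Equiv.swap_apply_left]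
  rcases hG with rfl | rfl
  · exact ⟨g, trivial, l0, hl0, m0, hm0, hgl, hgm⟩
  · by_cases hsg : Equiv.Perm.sign g = 1
    · exact ⟨g, Equiv.Perm.mem_alternatingGroup.mpr hsg, l0, hl0, m0, hm0, hgl, hgm⟩
    have hsg' : Equiv.Perm.sign g = -1 := by
      rcases Int.units_eq_one_or (Equiv.Perm.sign g) with h | h
      · exact absurd h hsg
      · exact h
    -- find a third point
    have hcard : ({l0, m0} : Finset X).card < Fintype.card X := by
      calc ({l0, m0} : Finset X).card ≤ 2 := Finset.card_insert_le _ _ |>.trans (by simp)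
      _ < 3 := by norm_num
      _ ≤ Fintype.card X := h3
    have hnsub : ¬ (Finset.univ ⊆ ({l0, m0} : Finset X)) := by
      intro hsub
      have := Finset.card_le_card hsub
      rw [Finset.card_univ] at this
      omega
    obtain ⟨ν0, -, hν0⟩ := Finset.not_subset.mp hnsub
    have hν0l : ν0 ≠ l0 := by simp at hν0; exact hν0.1
    have hν0m : ν0 ≠ m0 := by simp at hν0; exact hν0.2
    by_cases hν0T : ν0 ∈ T
    · refine ⟨g * Equiv.swap l0 ν0, ?_, ν0, hν0T, m0, hm0, ?_, ?_⟩
      · rw [Equiv.Perm.mem_alternatingGroup, map_mul, hsg', Equiv.Perm.sign_swap hν0l.symm]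
        norm_num
      · rw [Equiv.Perm.mul_apply, Equiv.swap_apply_right, hgl]
      · rw [Equiv.Perm.mul_apply, Equiv.swap_apply_of_ne_of_ne hlm.symm (Ne.symm hν0m), hgm]
    · refine ⟨g * Equiv.swap m0 ν0, ?_, l0, hl0, ν0, hν0T, ?_, ?_⟩
      · rw [Equiv.Perm.mem_alternatingGroup, map_mul, hsg', Equiv.Perm.sign_swap hν0m.symm]
        norm_num
      · rw [Equiv.Perm.mul_apply, Equiv.swap_apply_of_ne_of_ne hlm (Ne.symm hν0l), hgl]
      · rw [Equiv.Perm.mul_apply, Equiv.swap_apply_right, hgm]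


set_option maxHeartbeats 3000000 in
/-- Let `n ≥ 3`, `K` perfect, `A, B ∈ Mₙ(K)` with `χ_A` irreducible over `K` and Galois group
(as a permutation group on the roots of `χ_A`) equal to the full symmetric group or the
alternating group. If `A` and `B` have a common invariant proper nonzero subspace over an
extension field `L` of `K`, then `AB = BA`. -/
theorem stmt_7 {n : ℕ} (hn : 3 ≤ n) {K : Type*} [Field K] [PerfectField K]
    {L : Type*} [Field L] [Algebra K L]
    (A B : Matrix (Fin n) (Fin n) K)
    (hirr : Irreducible A.charpoly)
    [DecidableEq (A.charpoly.rootSet A.charpoly.SplittingField)]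
    (hgal : (Polynomial.Gal.galActionHom A.charpoly A.charpoly.SplittingField).range = ⊤ ∨
      (Polynomial.Gal.galActionHom A.charpoly A.charpoly.SplittingField).range =
        alternatingGroup (A.charpoly.rootSet A.charpoly.SplittingField))
    (W : Submodule L (Fin n → L))
    (hW1 : W ≠ ⊥) (hW2 : W ≠ ⊤)
    (hA : ∀ v ∈ W, (A.map (algebraMap K L)).mulVec v ∈ W)
    (hB : ∀ v ∈ W, (B.map (algebraMap K L)).mulVec v ∈ W) :
    A * B = B * A := by
  open Polynomial Matrix in
  set χ := A.charpoly with hχ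
  set S := χ.SplittingField with hS
  have hsep : χ.Separable := PerfectField.separable_of_irreducible hirr
  have hndeg : χ.natDegree = n := by
    rw [hχ, Matrix.charpoly_natDegree_eq_dim, Fintype.card_fin]
  have hsplits : (χ.map (algebraMap K S)).Splits := Polynomial.SplittingField.splits χ
  set R := χ.rootSet S with hR
  have hcard : Fintype.card R = n := by
    rw [show Fintype.card R = Fintype.card (χ.rootSet S) from rfl,
      Polynomial.card_rootSet_eq_natDegree hsep hsplits, hndeg]
  set AS := A.map (algebraMap K S) with hAS
  set BS := B.map (algebraMap K S) with hBS
  have hgal2 : (Polynomial.Gal.galActionHom χ S).range = ⊤ ∨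
      (Polynomial.Gal.galActionHom χ S).range = alternatingGroup R := by
    rcases hgal with h | h
    · exact Or.inl h
    · refine Or.inr (h.trans ?_)
      congr!
  have hroot : ∀ ρ : R, AS.charpoly.eval (ρ : S) = 0 := by
    intro ρ
    rw [hAS, Matrix.charpoly_map]
    have h2 := (Polynomial.mem_rootSet.mp ρ.2).2
    rwa [Polynomial.aeval_def, ← Polynomial.eval_map] at h2
  choose v hv0 hveig using fun ρ : R => aux_exists_eigenvec AS (hroot ρ)
  have hcoeinj : Function.Injective (fun ρ : R => (ρ : S)) := Subtype.coe_injective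
  haveI hRne : Nonempty R := by
    rw [← Fintype.card_pos_iff, hcard]; omega
  have hli : LinearIndependent S v := by
    apply Module.End.eigenvectors_linearIndependent' (Matrix.mulVecLin AS)
      (fun ρ : R => (ρ : S)) hcoeinj v
    intro ρ
    refine ⟨Module.End.mem_eigenspace_iff.mpr ?_, hv0 ρ⟩
    rw [Matrix.mulVecLin_apply]
    exact hveig ρ
  have hfinrank : Fintype.card R = Module.finrank S (Fin n → S) := by
    rw [hcard, Module.finrank_fin_fun]
  let bS : Module.Basis R S (Fin n → S) := basisOfLinearIndependentOfCardEqFinrank hli hfinrank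
  have hbS : ∀ ρ, bS ρ = v ρ := fun ρ => by
    rw [show bS = basisOfLinearIndependentOfCardEqFinrank hli hfinrank from rfl,
      coe_basisOfLinearIndependentOfCardEqFinrank]
  have hreprS : ∀ (x : Fin n → S) (ρ : R), bS.repr (AS.mulVec x) ρ = (ρ : S) * bS.repr x ρ := by
    intro x ρ
    exact aux_repr_mulVec AS bS (fun ρ : R => (ρ : S))
      (fun i => by rw [hbS]; exact hveig i) x ρ
  set γ : R → R → S := fun mu lam => bS.repr (BS.mulVec (v lam)) mu with hγ
  have hBexp : ∀ lam : R, BS.mulVec (v lam) = ∑ mu : R, γ mu lam • v mu := by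
    intro lam
    conv_lhs => rw [← bS.sum_repr (BS.mulVec (v lam))]
    exact Finset.sum_congr rfl fun mu _ => by rw [hbS]
  have hkey : ∀ (ϕ : S ≃ₐ[K] S) (lam mu : R), γ mu lam = 0 →
      γ (Polynomial.Gal.galActionHom χ S (Polynomial.Gal.restrict χ S ϕ) mu)
        (Polynomial.Gal.galActionHom χ S (Polynomial.Gal.restrict χ S ϕ) lam) = 0 := by
    intro ϕ lam mu h0
    set π := Polynomial.Gal.galActionHom χ S (Polynomial.Gal.restrict χ S ϕ) with hπdef
    have hπ : ∀ x : R, ((π x : R) : S) = ϕ (x : S) := fun x =>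
      Polynomial.Gal.galActionHom_restrict χ S ϕ x
    set sv : R → (Fin n → S) := fun ρ => fun i => ϕ (v ρ i) with hsv
    have hfixA : AS.map ϕ.toAlgHom.toRingHom = AS := by
      ext i j
      simp [hAS, Matrix.map_apply, AlgEquiv.commutes]
    have hfixB : BS.map ϕ.toAlgHom.toRingHom = BS := by
      ext i j
      simp [hBS, Matrix.map_apply, AlgEquiv.commutes]
    have hϕA : ∀ x : Fin n → S,
        AS.mulVec (fun i => ϕ (x i)) = fun i => ϕ (AS.mulVec x i) := by
      intro x
      conv_lhs => rw [← hfixA]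
      exact aux_map_mulVec ϕ.toAlgHom.toRingHom AS x
    have hϕB : ∀ x : Fin n → S,
        BS.mulVec (fun i => ϕ (x i)) = fun i => ϕ (BS.mulVec x i) := by
      intro x
      conv_lhs => rw [← hfixB]
      exact aux_map_mulVec ϕ.toAlgHom.toRingHom BS x
    have hsveig : ∀ ρ : R, AS.mulVec (sv ρ) = (ϕ (ρ : S)) • sv ρ := by
      intro ρ
      calc AS.mulVec (sv ρ) = fun i => ϕ (AS.mulVec (v ρ) i) := hϕA (v ρ)
        _ = fun i => ϕ ((((ρ : S)) • v ρ) i) := by rw [hveig ρ]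
        _ = ϕ (ρ : S) • sv ρ := by
            funext i
            simp [hsv, Pi.smul_apply, smul_eq_mul, _root_.map_mul]
    have hrepr_sv : ∀ ρ mu : R, mu ≠ π ρ → bS.repr (sv ρ) mu = 0 := by
      intro ρ mu hne
      have h1 : (mu : S) * bS.repr (sv ρ) mu = ϕ (ρ : S) * bS.repr (sv ρ) mu := by
        rw [← hreprS (sv ρ) mu, hsveig ρ, _root_.map_smul, Finsupp.smul_apply, smul_eq_mul]
      by_contra h2
      apply hne
      have h3 : (mu : S) = ϕ (ρ : S) := mul_right_cancel₀ h2 h1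
      rw [← hπ ρ] at h3
      exact Subtype.ext h3
    have hsv_eq : ∀ ρ : R, sv ρ = bS.repr (sv ρ) (π ρ) • v (π ρ) := by
      intro ρ
      conv_lhs => rw [← bS.sum_repr (sv ρ)]
      rw [Finset.sum_eq_single (π ρ)]
      · rw [hbS]
      · intro mu _ hne
        rw [hrepr_sv ρ mu hne, zero_smul]
      · intro h
        exact absurd (Finset.mem_univ _) h
    set e : R → S := fun ρ => bS.repr (sv ρ) (π ρ) with he
    have he0 : ∀ ρ, e ρ ≠ 0 := by
      intro ρ h
      apply hv0 ρ
      have hsv0 : sv ρ = 0 := by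
        rw [hsv_eq ρ, show (bS.repr (sv ρ)) (π ρ) = e ρ from rfl, h, zero_smul]
      funext i
      have : ϕ (v ρ i) = 0 := congrFun hsv0 i
      simpa using ϕ.injective (by simpa using this)
    have hX1 : BS.mulVec (sv lam) = ∑ mu : R, (ϕ (γ mu lam) * e mu) • bS (π mu) := by
      calc BS.mulVec (sv lam) = fun i => ϕ (BS.mulVec (v lam) i) := hϕB (v lam)
        _ = fun i => ϕ ((∑ mu : R, γ mu lam • v mu) i) := by rw [hBexp lam]
        _ = ∑ mu : R, ϕ (γ mu lam) • sv mu := by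
            funext i
            simp [Finset.sum_apply, map_sum, hsv, smul_eq_mul, _root_.map_mul]
        _ = ∑ mu : R, (ϕ (γ mu lam) * e mu) • bS (π mu) := by
            refine Finset.sum_congr rfl fun mu _ => ?_
            rw [hsv_eq mu, smul_smul, hbS]
    have hc1 : bS.repr (BS.mulVec (sv lam)) (π mu) = ϕ (γ mu lam) * e mu := by
      rw [hX1]
      have hre : ∑ mu : R, (ϕ (γ mu lam) * e mu) • bS (π mu)
          = ∑ ν : R, (ϕ (γ (π.symm ν) lam) * e (π.symm ν)) • bS ν := by
        rw [← Equiv.sum_comp π (fun ν => (ϕ (γ (π.symm ν) lam) * e (π.symm ν)) • bS ν)]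
        simp
        rfl
      rw [hre, bS.repr_sum_self]
      simp
    have hc2 : bS.repr (BS.mulVec (sv lam)) (π mu) = e lam * γ (π mu) (π lam) := by
      conv_lhs => rw [hsv_eq lam, Matrix.mulVec_smul, _root_.map_smul]
      rw [Finsupp.smul_apply, smul_eq_mul]
    have h5 : e lam * γ (π mu) (π lam) = 0 := by
      rw [← hc2, hc1, h0, map_zero, zero_mul]
    rcases mul_eq_zero.mp h5 with h | h
    · exact absurd h (he0 lam)
    · exact h
  -- pass to the algebraic closure of L
  set Ω := AlgebraicClosure L with hΩ
  haveI : Algebra.IsAlgebraic K S := Algebra.IsAlgebraic.of_finite K S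
  set φ : S →ₐ[K] Ω := IsAlgClosed.lift with hφ
  have hφinj : Function.Injective φ := φ.toRingHom.injective
  set AΩ := A.map (algebraMap K Ω) with hAΩ
  set BΩ := B.map (algebraMap K Ω) with hBΩ
  set w : R → (Fin n → Ω) := fun ρ => fun i => φ (v ρ i) with hw
  have hfixS : ∀ C : Matrix (Fin n) (Fin n) K,
      (C.map (algebraMap K S)).map φ.toRingHom = C.map (algebraMap K Ω) := by
    intro C
    ext i j
    simp [Matrix.map_apply]
  have hφvecA : ∀ x : Fin n → S,
      AΩ.mulVec (fun i => φ (x i)) = fun i => φ (AS.mulVec x i) := by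
    intro x
    rw [hAΩ, ← hfixS A]
    exact aux_map_mulVec φ.toRingHom AS x
  have hφvecB : ∀ x : Fin n → S,
      BΩ.mulVec (fun i => φ (x i)) = fun i => φ (BS.mulVec x i) := by
    intro x
    rw [hBΩ, ← hfixS B]
    exact aux_map_mulVec φ.toRingHom BS x
  have hweig : ∀ ρ : R, AΩ.mulVec (w ρ) = φ (ρ : S) • w ρ := by
    intro ρ
    calc AΩ.mulVec (w ρ) = fun i => φ (AS.mulVec (v ρ) i) := hφvecA (v ρ)
      _ = fun i => φ ((((ρ : S)) • v ρ) i) := by rw [hveig ρ]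
      _ = φ (ρ : S) • w ρ := by
          funext i
          simp [hw, Pi.smul_apply, smul_eq_mul, _root_.map_mul]
  have hw0 : ∀ ρ, w ρ ≠ 0 := by
    intro ρ h
    apply hv0 ρ
    funext i
    have : φ (v ρ i) = 0 := congrFun h i
    simpa using hφinj (by simpa using this)
  have hφcoeinj : Function.Injective (fun ρ : R => φ (ρ : S)) := by
    intro x y hxy
    exact Subtype.ext (hφinj hxy)
  have hliΩ : LinearIndependent Ω w := by
    apply Module.End.eigenvectors_linearIndependent' (Matrix.mulVecLin AΩ)
      (fun ρ : R => φ (ρ : S)) hφcoeinj w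
    intro ρ
    refine ⟨Module.End.mem_eigenspace_iff.mpr ?_, hw0 ρ⟩
    rw [Matrix.mulVecLin_apply]
    exact hweig ρ
  have hfinrankΩ : Fintype.card R = Module.finrank Ω (Fin n → Ω) := by
    rw [hcard, Module.finrank_fin_fun]
  let bΩ : Module.Basis R Ω (Fin n → Ω) := basisOfLinearIndependentOfCardEqFinrank hliΩ hfinrankΩ
  have hbΩ : ∀ ρ, bΩ ρ = w ρ := fun ρ => by
    rw [show bΩ = basisOfLinearIndependentOfCardEqFinrank hliΩ hfinrankΩ from rfl,
      coe_basisOfLinearIndependentOfCardEqFinrank]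
  have hcγ : ∀ mu lam : R, bΩ.repr (BΩ.mulVec (w lam)) mu = φ (γ mu lam) := by
    intro mu lam
    have h1 : BΩ.mulVec (w lam) = ∑ ν : R, φ (γ ν lam) • bΩ ν := by
      calc BΩ.mulVec (w lam) = fun i => φ (BS.mulVec (v lam) i) := hφvecB (v lam)
        _ = fun i => φ ((∑ ν : R, γ ν lam • v ν) i) := by rw [hBexp lam]
        _ = ∑ ν : R, φ (γ ν lam) • bΩ ν := by
            funext i
            simp [Finset.sum_apply, map_sum, hbΩ, hw, smul_eq_mul, _root_.map_mul]
    rw [h1, bΩ.repr_sum_self]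
  -- the invariant subspace over Ω
  set g : (Fin n → L) → (Fin n → Ω) := fun x => fun i => algebraMap L Ω (x i) with hg
  set WΩ := Submodule.span Ω (g '' (W : Set (Fin n → L))) with hWΩ
  have halg : (algebraMap K Ω : K →+* Ω) = (algebraMap L Ω).comp (algebraMap K L) :=
    IsScalarTower.algebraMap_eq K L Ω
  have hfixL : ∀ C : Matrix (Fin n) (Fin n) K,
      (C.map (algebraMap K L)).map (algebraMap L Ω) = C.map (algebraMap K Ω) := by
    intro C
    ext i j
    simp [Matrix.map_apply, halg]
  have hinv : ∀ (C : Matrix (Fin n) (Fin n) K),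
      (∀ y ∈ W, (C.map (algebraMap K L)).mulVec y ∈ W) →
      ∀ x ∈ WΩ, (C.map (algebraMap K Ω)).mulVec x ∈ WΩ := by
    intro C hC x hx
    induction hx using Submodule.span_induction with
    | mem x hx =>
        obtain ⟨y, hy, rfl⟩ := hx
        have hgy : (C.map (algebraMap K Ω)).mulVec (g y)
            = g ((C.map (algebraMap K L)).mulVec y) := by
          rw [← hfixL C]
          exact aux_map_mulVec (algebraMap L Ω) (C.map (algebraMap K L)) y
        rw [hgy]
        exact Submodule.subset_span ⟨_, hC y hy, rfl⟩
    | zero =>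
        rw [Matrix.mulVec_zero]
        exact WΩ.zero_mem
    | add x y _ _ hx hy =>
        rw [Matrix.mulVec_add]
        exact WΩ.add_mem hx hy
    | smul r x _ hx =>
        rw [Matrix.mulVec_smul]
        exact WΩ.smul_mem r hx
  have hWΩbot : ∃ x ∈ WΩ, x ≠ 0 := by
    obtain ⟨y, hyW, hy0⟩ := Submodule.exists_mem_ne_zero_of_ne_bot hW1
    refine ⟨g y, Submodule.subset_span ⟨y, hyW, rfl⟩, ?_⟩
    intro h
    apply hy0
    funext i
    have : algebraMap L Ω (y i) = 0 := congrFun h i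
    simpa using (algebraMap L Ω).injective (by simpa using this)
  have hWlt : Module.finrank L W < n := by
    have h1 := Submodule.finrank_lt (K := L) (V := Fin n → L) hW2
    rwa [Module.finrank_fin_fun] at h1
  have hfrΩ : Module.finrank Ω WΩ < n := by
    set k := Module.finrank L W with hk
    let bW : Module.Basis (Fin k) L W := Module.finBasis L W
    set u : Fin k → (Fin n → Ω) := fun i => g ((bW i : Fin n → L)) with hu
    have hWΩle : WΩ ≤ Submodule.span Ω (Set.range u) := by
      rw [hWΩ, Submodule.span_le]
      rintro x ⟨y, hy, rfl⟩
      have hyrepr : y = ∑ i, bW.repr ⟨y, hy⟩ i • ((bW i : Fin n → L)) := by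
        have h2 := bW.sum_repr ⟨y, hy⟩
        have h3 := congrArg (W.subtype) h2
        rw [map_sum] at h3
        simp only [Submodule.coe_subtype, _root_.map_smul] at h3
        exact h3.symm
      have hgy : g y = ∑ i, algebraMap L Ω (bW.repr ⟨y, hy⟩ i) • u i := by
        funext j
        have h4 : y j = ∑ i, bW.repr ⟨y, hy⟩ i * (bW i : Fin n → L) j := by
          conv_lhs => rw [hyrepr]
          rw [Finset.sum_apply]
          simp [Pi.smul_apply, smul_eq_mul]
        rw [hg]
        show algebraMap L Ω (y j) = _
        rw [h4, map_sum, Finset.sum_apply]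
        refine Finset.sum_congr rfl fun i _ => ?_
        simp [hu, hg, smul_eq_mul, _root_.map_mul]
      rw [hgy]
      exact Submodule.sum_mem _ fun i _ =>
        Submodule.smul_mem _ _ (Submodule.subset_span ⟨i, rfl⟩)
    calc Module.finrank Ω WΩ ≤ Module.finrank Ω (Submodule.span Ω (Set.range u)) :=
          Submodule.finrank_mono hWΩle
      _ ≤ Fintype.card (Fin k) := finrank_range_le_card u
      _ = k := Fintype.card_fin k
      _ < n := hWlt
  have hWΩtop : WΩ ≠ ⊤ := by
    intro h
    rw [h, finrank_top, Module.finrank_fin_fun] at hfrΩ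
    omega
  have hreprΩA : ∀ (x : Fin n → Ω) (ρ : R), bΩ.repr (AΩ.mulVec x) ρ = φ (ρ : S) * bΩ.repr x ρ :=
    fun x ρ => aux_repr_mulVec AΩ bΩ (fun ρ : R => φ (ρ : S))
      (fun i => by rw [hbΩ]; exact hweig i) x ρ
  have hsupp : ∀ s : Finset R, ∀ x ∈ WΩ, (∀ ρ ∉ s, bΩ.repr x ρ = 0) →
      ∀ ρ : R, bΩ.repr x ρ • w ρ ∈ WΩ := by
    intro s
    induction s using Finset.induction_on with
    | empty =>
        intro x hx h0 ρ
        rw [h0 ρ (Finset.notMem_empty ρ), zero_smul]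
        exact WΩ.zero_mem
    | insert a s ha ih =>
        intro x hx h0 ρ
        set y := AΩ.mulVec x - φ (a : S) • x with hy
        have hymem : y ∈ WΩ := WΩ.sub_mem (hinv A hA x hx) (WΩ.smul_mem _ hx)
        have hyr : ∀ mu : R, bΩ.repr y mu = (φ (mu : S) - φ (a : S)) * bΩ.repr x mu := by
          intro mu
          rw [hy, map_sub, _root_.map_smul, Finsupp.sub_apply, Finsupp.smul_apply,
            hreprΩA, smul_eq_mul, sub_mul]
        have hy0 : ∀ mu ∉ s, bΩ.repr y mu = 0 := by
          intro mu hmu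
          by_cases hma : mu = a
          · rw [hyr, hma, sub_self, zero_mul]
          · rw [hyr, h0 mu (by simp only [Finset.mem_insert]; push_neg; exact ⟨hma, hmu⟩),
              mul_zero]
        have hstep : ∀ mu : R, mu ≠ a → bΩ.repr x mu • w mu ∈ WΩ := by
          intro mu hma
          have h1 := ih y hymem hy0 mu
          rw [hyr] at h1
          have hne : φ (mu : S) - φ (a : S) ≠ 0 :=
            sub_ne_zero_of_ne (fun h => hma (hφcoeinj h))
          have h2 := WΩ.smul_mem (φ (mu : S) - φ (a : S))⁻¹ h1
          rwa [smul_smul, ← mul_assoc, inv_mul_cancel₀ hne, one_mul] at h2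
        by_cases hρ : ρ = a
        · subst hρ
          have hx2 : ∑ mu : R, bΩ.repr x mu • w mu = x := by
            conv_rhs => rw [← bΩ.sum_repr x]
            exact Finset.sum_congr rfl fun mu _ => by rw [hbΩ]
          have h5 := Finset.add_sum_erase Finset.univ
            (fun mu => bΩ.repr x mu • w mu) (Finset.mem_univ ρ)
          rw [hx2] at h5
          have h6 : bΩ.repr x ρ • w ρ
              = x - ∑ mu ∈ Finset.univ.erase ρ, bΩ.repr x mu • w mu :=
            eq_sub_of_add_eq h5
          rw [h6]
          exact WΩ.sub_mem hx (Submodule.sum_mem _ fun mu hmu =>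
            hstep mu (Finset.ne_of_mem_erase hmu))
        · exact hstep ρ hρ
  obtain ⟨x0, hx0W, hx00⟩ := hWΩbot
  have hTne : ∃ lam0 : R, w lam0 ∈ WΩ := by
    have h1 : ∃ ρ : R, bΩ.repr x0 ρ ≠ 0 := by
      by_contra h
      push_neg at h
      apply hx00
      conv_lhs => rw [← bΩ.sum_repr x0]
      refine Finset.sum_eq_zero fun mu _ => ?_
      rw [h mu, zero_smul]
    obtain ⟨ρ, hρ⟩ := h1
    have h2 := hsupp Finset.univ x0 hx0W (fun mu hmu => absurd (Finset.mem_univ mu) hmu) ρ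
    have h3 := WΩ.smul_mem (bΩ.repr x0 ρ)⁻¹ h2
    rw [smul_smul, inv_mul_cancel₀ hρ, one_smul] at h3
    exact ⟨ρ, h3⟩
  have hTnotall : ∃ mu0 : R, w mu0 ∉ WΩ := by
    by_contra h
    push_neg at h
    apply hWΩtop
    rw [eq_top_iff, ← bΩ.span_eq, Submodule.span_le]
    rintro z ⟨ρ, rfl⟩
    rw [hbΩ]
    exact h ρ
  obtain ⟨lam0, hlam0⟩ := hTne
  obtain ⟨mu0, hmu0⟩ := hTnotall
  have hvanish : ∀ lam : R, w lam ∈ WΩ → ∀ mu : R, w mu ∉ WΩ → γ mu lam = 0 := by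
    intro lam hlam mu hmu
    have hxW : BΩ.mulVec (w lam) ∈ WΩ := hinv B hB (w lam) hlam
    have h1 := hsupp Finset.univ _ hxW (fun m hm => absurd (Finset.mem_univ m) hm) mu
    by_cases h2 : bΩ.repr (BΩ.mulVec (w lam)) mu = 0
    · rw [hcγ] at h2
      exact hφinj (by rw [h2, map_zero])
    · exfalso
      apply hmu
      have h3 := WΩ.smul_mem (bΩ.repr (BΩ.mulVec (w lam)) mu)⁻¹ h1
      rwa [smul_smul, inv_mul_cancel₀ h2, one_smul] at h3
  have hγ0 : ∀ lam mu : R, mu ≠ lam → γ mu lam = 0 := by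
    intro lam mu hne
    have hcomb := aux_comb (hG := hgal2) (h3 := by rw [hcard]; exact hn)
      (T := {ρ : R | w ρ ∈ WΩ}) (hl0 := hlam0) (hm0 := hmu0)
      (hab := show lam ≠ mu from fun h => hne h.symm)
    obtain ⟨π, hπG, l, hl, m, hm, hπl, hπm⟩ := hcomb
    obtain ⟨σ, hσ⟩ := MonoidHom.mem_range.mp hπG
    obtain ⟨ϕ, hϕ⟩ := Polynomial.Gal.restrict_surjective χ S σ
    have h1 : γ m l = 0 := hvanish l hl m hm
    have h2 := hkey ϕ l m h1
    rw [hϕ, hσ, hπl, hπm] at h2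
    exact h2
  have hBdiag : ∀ lam : R, BS.mulVec (v lam) = γ lam lam • v lam := by
    intro lam
    rw [hBexp lam, Finset.sum_eq_single lam]
    · intro mu _ hne
      rw [hγ0 lam mu hne, zero_smul]
    · intro h
      exact absurd (Finset.mem_univ _) h
  have hcomm : AS * BS = BS * AS := by
    have h1 : Matrix.toLin' (AS * BS) = Matrix.toLin' (BS * AS) := by
      apply bS.ext
      intro lam
      rw [hbS, Matrix.toLin'_apply, Matrix.toLin'_apply]
      calc (AS * BS) *ᵥ v lam = AS *ᵥ (BS *ᵥ v lam) := by rw [Matrix.mulVec_mulVec]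
        _ = γ lam lam • ((lam : S) • v lam) := by
            rw [hBdiag lam, Matrix.mulVec_smul, hveig lam]
        _ = (lam : S) • (γ lam lam • v lam) := smul_comm _ _ _
        _ = BS *ᵥ (AS *ᵥ v lam) := by
            rw [hveig lam, Matrix.mulVec_smul, hBdiag lam]
        _ = (BS * AS) *ᵥ v lam := by rw [Matrix.mulVec_mulVec]
    exact Matrix.toLin'.injective h1
  have hmap : (A * B).map (algebraMap K S) = (B * A).map (algebraMap K S) := by
    rw [Matrix.map_mul, Matrix.map_mul]
    exact hcomm
  ext i j
  have h2 : algebraMap K S ((A * B) i j) = algebraMap K S ((B * A) i j) := by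
    have h3 := congrArg (fun M : Matrix (Fin n) (Fin n) S => M i j) hmap
    simpa [Matrix.map_apply] using h3
  exact (algebraMap K S).injective h2
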